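/- Let 0 < a < b, let U > 0, let P ⊆ {0,…,K−1} be a pattern with positive perturbation bounds α_k > 0 for k ∈ P, and let θ : ℝ^K → ℝ^D be a decoder that is U-robust with respect to P with bounds (α_k). For each k ∈ P let Q_k be the least positive integer strictly greater than (b − a)/(2α_k), and let R_P ⊆ ℝ^K be the quantization grid for pattern P with these Q_k. Then R_P is finite with |R_P| = ∏_{k∈P} Q_k, and for every spectrum z preserved by P there exists ẑ ∈ R_P with ‖θ(z) − θ(ẑ)‖₂ ≤ U. (Existence of a U-representation set for a U-robust pattern, Section 3.2.) -/

import Mathlib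

attribute [local instance] Classical.propDecidable

/-- A spectrum `z ∈ ℝ^K` is preserved by a pattern `P ⊆ {0,…,K-1}` if `z k ∈ [a,b]`
for every `k ∈ P` and `z k = 0` for every `k ∉ P`. -/
def Preserved {K : ℕ} (a b : ℝ) (P : Finset (Fin K))
    (z : EuclideanSpace ℝ (Fin K)) : Prop :=
  (∀ k ∈ P, z k ∈ Set.Icc a b) ∧ ∀ k ∉ P, z k = 0

/-- A decoder `θ` is `U`-robust w.r.t. pattern `P` with perturbation bounds `α` if the
reconstructions of any two spectra preserved by `P` that differ by at most `α k` on
each `k ∈ P` are within `U` of each other. -/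
def URobust {K D : ℕ} (a b U : ℝ) (P : Finset (Fin K)) (α : Fin K → ℝ)
    (θ : EuclideanSpace ℝ (Fin K) → EuclideanSpace ℝ (Fin D)) : Prop :=
  ∀ z z' : EuclideanSpace ℝ (Fin K), Preserved a b P z → Preserved a b P z' →
    (∀ k ∈ P, |z k - z' k| ≤ α k) → ‖θ z - θ z'‖ ≤ U

/-- The quantization-grid spectrum for pattern `P`: given a choice `f` of indices
`i_k` for `k ∈ P`, the spectrum whose `k`-th coordinate is the midpoint
`a + (2 i_k - 1)(b - a)/(2 Q_k)` for `k ∈ P` and `0` for `k ∉ P`. -/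
noncomputable def gridSpec {K : ℕ} (a b : ℝ) (P : Finset (Fin K)) (Q : Fin K → ℕ)
    (f : ∀ k ∈ P, ℕ) : EuclideanSpace ℝ (Fin K) :=
  WithLp.toLp 2 (fun k => if h : k ∈ P then a + (2 * (f k h : ℝ) - 1) * (b - a) / (2 * (Q k : ℝ)) else 0)

/-- The quantization grid for pattern `P`: all grid spectra obtained from choices
`(i_k)_{k∈P}` with `1 ≤ i_k ≤ Q_k`. -/
noncomputable def gridFinset {K : ℕ} (a b : ℝ) (P : Finset (Fin K)) (Q : Fin K → ℕ) :
    Finset (EuclideanSpace ℝ (Fin K)) :=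
  (P.pi fun k => Finset.Icc 1 (Q k)).image (gridSpec a b P Q)

lemma exists_grid_index (a b z : ℝ) (hab : a < b) (Q : ℕ) (hQ1 : 1 ≤ Q)
    (hz : z ∈ Set.Icc a b) :
    ∃ i ∈ Finset.Icc 1 Q,
      |z - (a + (2 * (i : ℝ) - 1) * (b - a) / (2 * (Q : ℝ)))| ≤ (b - a) / (2 * (Q : ℝ)) := by
  have hQ0 : (0:ℝ) < Q := by exact_mod_cast hQ1
  have hba : (0:ℝ) < b - a := by linarith
  set t : ℝ := (z - a) * Q / (b - a) with ht
  have ht0 : 0 ≤ t := by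
    apply div_nonneg _ hba.le
    nlinarith [hz.1]
  have htQ : t ≤ Q := by
    rw [ht, div_le_iff₀ hba]; nlinarith [hz.2]
  refine ⟨min Q (Nat.floor t + 1), ?_, ?_⟩
  · simp only [Finset.mem_Icc]; omega
  set i := min Q (Nat.floor t + 1) with hi
  have key : ((i:ℝ) - 1 ≤ t ∧ t ≤ i) := by
    by_cases hc : Nat.floor t + 1 ≤ Q
    · have hie : i = Nat.floor t + 1 := by omega
      have h1 := Nat.floor_le ht0
      have h2 := Nat.lt_floor_add_one t
      constructor
      · rw [hie]; push_cast; linarith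
      · rw [hie]; push_cast; linarith
    · have hie : i = Q := by omega
      have hfl : Q ≤ Nat.floor t := by omega
      have : (Q:ℝ) ≤ Nat.floor t := by exact_mod_cast hfl
      have h1 := Nat.floor_le ht0
      constructor
      · rw [hie]; linarith
      · rw [hie]; exact htQ
  set d : ℝ := (b - a) / (2 * (Q:ℝ)) with hd
  have hd0 : 0 < d := by positivity
  have hz' : z = a + 2 * t * d := by
    rw [hd, ht]; field_simp; ring
  have hmid : a + (2 * (i:ℝ) - 1) * (b - a) / (2 * (Q:ℝ)) = a + (2 * (i:ℝ) - 1) * d := by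
    rw [hd]; ring
  rw [hmid, abs_le]
  constructor <;> nlinarith [key.1, key.2, hd0]


/-- Existence of a `U`-representation set for a `U`-robust pattern (Section 3.2):
with `Q_k = ⌊(b-a)/(2α_k)⌋ + 1`, the quantization grid `R_P` for pattern `P` has
cardinality `∏_{k∈P} Q_k`, and every spectrum preserved by `P` has a quantized
representative in `R_P` whose reconstruction is within `U`. -/
theorem exists_U_representation_set {K D : ℕ} (a b U : ℝ) (ha : 0 < a) (hab : a < b)
    (hU : 0 < U) (P : Finset (Fin K)) (α : Fin K → ℝ) (hα : ∀ k ∈ P, 0 < α k)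
    (θ : EuclideanSpace ℝ (Fin K) → EuclideanSpace ℝ (Fin D))
    (hrob : URobust a b U P α θ)
    (Q : Fin K → ℕ) (hQ : ∀ k ∈ P, Q k = Nat.floor ((b - a) / (2 * α k)) + 1) :
    (gridFinset a b P Q).card = ∏ k ∈ P, Q k ∧
      ∀ z : EuclideanSpace ℝ (Fin K), Preserved a b P z →
        ∃ zh ∈ gridFinset a b P Q, ‖θ z - θ zh‖ ≤ U := by
  have hba : (0:ℝ) < b - a := by linarith
  have hQ1 : ∀ k ∈ P, 1 ≤ Q k := by intro k hk; rw [hQ k hk]; omega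
  constructor
  · -- cardinality
    rw [gridFinset, Finset.card_image_of_injOn, Finset.card_pi]
    · simp [Nat.card_Icc]
    · intro f hf g hg hfg
      funext k hk
      have := congrArg (fun v : EuclideanSpace ℝ (Fin K) => v k) hfg
      simp only [gridSpec, WithLp.ofLp_toLp, dif_pos hk] at this
      have hQk0 : (0:ℝ) < (Q k : ℝ) := by exact_mod_cast hQ1 k hk
      field_simp at this
      have h2 : (b - a) * ((f k hk : ℝ) - g k hk) = 0 := by linarith
      rcases mul_eq_zero.1 h2 with h | h
      · linarith
      · exact_mod_cast (by linarith : (f k hk : ℝ) = g k hk)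
  · intro z hz
    choose i hmem hbd using fun k (hk : k ∈ P) =>
      exists_grid_index a b (z k) hab (Q k) (hQ1 k hk) (hz.1 k hk)
    refine ⟨gridSpec a b P Q i, Finset.mem_image.2 ⟨i, Finset.mem_pi.2 hmem, rfl⟩, ?_⟩
    have hpres : Preserved a b P (gridSpec a b P Q i) := by
      constructor
      · intro k hk
        have hik := Finset.mem_Icc.1 (hmem k hk)
        have h1 : (1:ℝ) ≤ (i k hk : ℝ) := by exact_mod_cast hik.1
        have h2 : ((i k hk : ℝ)) ≤ (Q k : ℝ) := by exact_mod_cast hik.2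
        have hQk0 : (0:ℝ) < (Q k : ℝ) := by exact_mod_cast hQ1 k hk
        simp only [gridSpec, dif_pos hk, Set.mem_Icc]
        constructor
        · have h3 : 0 ≤ (2 * (i k hk : ℝ) - 1) * (b - a) / (2 * (Q k : ℝ)) :=
            div_nonneg (by nlinarith) (by positivity)
          linarith
        · have h3 : (2 * (i k hk : ℝ) - 1) * (b - a) / (2 * (Q k : ℝ)) ≤ b - a := by
            rw [div_le_iff₀ (by positivity)]
            nlinarith
          linarith
      · intro k hk
        simp [gridSpec, dif_neg hk]
    apply hrob z _ hz hpres
    intro k hk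
    have hbd' := hbd k hk
    simp only [gridSpec, dif_pos hk] at hbd' ⊢
    refine le_trans hbd' ?_
    -- (b - a) / (2 * Q k) ≤ α k
    have hαk := hα k hk
    have hfl : (b - a) / (2 * α k) < (Q k : ℝ) := by
      rw [hQ k hk]; push_cast
      exact Nat.lt_floor_add_one _
    have hQk0 : (0:ℝ) < (Q k : ℝ) := by exact_mod_cast hQ1 k hk
    rw [div_le_iff₀ (by positivity)]
    rw [div_lt_iff₀ (by positivity)] at hfl
    nlinarith
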